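/- Let q ≥ 1 be an odd integer, n a positive integer, and β₁, ..., β_{q-1} nonnegative integers with β₁ + ... + β_{q-1} ≤ n. Then the polynomial f(t) = n + β₁t + β₂t² + ... + β_{q-1}t^{q-1} satisfies f(ω) ≠ 0 for every q-th root of unity ω ∈ ℂ. -/

import Mathlib

/-- If `f(t) = n + β₁ t + ⋯ + β_{q-1} t^{q-1}` with `βᵢ ≥ 0` and `Σ βᵢ ≤ n`,
then `f` does not vanish at any `q`-th root of unity (`q` odd). -/
theorem stmt3 (q n : ℕ) (hq : 1 ≤ q) (hodd : Odd q) (hn : 0 < n)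
    (β : ℕ → ℕ) (hβ : ∑ i ∈ Finset.Icc 1 (q - 1), β i ≤ n)
    (ω : ℂ) (hω : ω ^ q = 1) :
    (n : ℂ) + ∑ i ∈ Finset.Icc 1 (q - 1), (β i : ℂ) * ω ^ i ≠ 0 := by
  have habs : ‖ω‖ = 1 := by
    have : ‖ω‖ ^ q = 1 := by
      rw [← norm_pow, hω, norm_one]
    have h0 : (0:ℝ) ≤ ‖ω‖ := norm_nonneg _
    rcases (pow_eq_one_iff_cases (R := ℝ)).mp this with h | h | h
    · omega
    · exact h
    · linarith [h.1]
  have hre : ∀ i : ℕ, -1 < (ω ^ i).re := by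
    intro i
    have habsi : ‖ω ^ i‖ = 1 := by rw [norm_pow, habs, one_pow]
    have hle : -1 ≤ (ω ^ i).re := by
      have := Complex.abs_re_le_norm (ω ^ i)
      rw [habsi] at this
      cases abs_le.mp this; linarith
    rcases lt_or_eq_of_le hle with h | h
    · exact h
    · exfalso
      have him : (ω ^ i).im = 0 := by
        have := Complex.sq_norm (ω ^ i)
        rw [habsi, Complex.normSq_apply, ← h] at this
        nlinarith
      have hzi : ω ^ i = (-1 : ℂ) := by
        apply Complex.ext <;> simp [← h, him]
      have : ((-1 : ℂ)) ^ q = 1 := by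
        rw [← hzi, ← pow_mul, mul_comm, pow_mul, hω, one_pow]
      rw [hodd.neg_one_pow] at this
      norm_num at this
  intro hzero
  have hre0 := congrArg Complex.re hzero
  simp only [Complex.add_re, Complex.natCast_re, Complex.re_sum, Complex.mul_re,
    Complex.natCast_im, zero_mul, sub_zero, Complex.zero_re] at hre0
  have key : (0:ℝ) < (n:ℝ) + ∑ i ∈ Finset.Icc 1 (q-1), (β i : ℝ) * (ω ^ i).re := by
    by_cases hall : ∀ i ∈ Finset.Icc 1 (q-1), β i = 0
    · have : ∑ i ∈ Finset.Icc 1 (q-1), (β i : ℝ) * (ω ^ i).re = 0 :=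
        Finset.sum_eq_zero fun i hi => by rw [hall i hi]; simp
      rw [this]
      positivity
    · push_neg at hall
      obtain ⟨i0, hi0, hβ0⟩ := hall
      have hlt : ∑ i ∈ Finset.Icc 1 (q-1), -((β i : ℝ)) <
          ∑ i ∈ Finset.Icc 1 (q-1), (β i : ℝ) * (ω ^ i).re := by
        apply Finset.sum_lt_sum
        · intro i _
          nlinarith [hre i, (Nat.cast_nonneg (β i) : (0:ℝ) ≤ β i)]
        · refine ⟨i0, hi0, ?_⟩
          have hβpos : (0:ℝ) < β i0 := by exact_mod_cast Nat.pos_of_ne_zero hβ0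
          nlinarith [hre i0]
      have hsum : ∑ i ∈ Finset.Icc 1 (q-1), -((β i : ℝ)) =
          -((∑ i ∈ Finset.Icc 1 (q-1), β i : ℕ) : ℝ) := by
        push_cast
        rw [← Finset.sum_neg_distrib]
      have hβr : ((∑ i ∈ Finset.Icc 1 (q-1), β i : ℕ) : ℝ) ≤ (n : ℝ) := by
        exact_mod_cast hβ
      rw [hsum] at hlt
      linarith
  rw [hre0] at key
  exact lt_irrefl 0 key
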